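/- Assume b_0 ≥ ν. For an integer l ≥ 1 set m̃_l := #{i ∈ {1,…,ν} : ε_{i,(l_1,l_2)} = 0 for every (l_1,l_2) ∈ Λ_l}. Then s_l ≥ ν − m̃_l. (In particular, since every variable counted by m̃_l is absent from every monomial of X_l, one has s_l ≥ ν − m_l, where m_l is the number of variables not appearing in a minimal monomial generating set of the ideal J(l).) -/
import Mathlib


open scoped BigOperators

/-- `s_l := l·b₀ − Σ_i ⌈l·ω_i/α_i⌉`. -/
noncomputable def sVal (ν : ℕ) (b0 : ℤ) (α ω : Fin ν → ℤ) (l : ℤ) : ℤ :=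
  l * b0 - ∑ i, ⌈((l * ω i : ℤ) : ℚ) / (α i : ℚ)⌉

/-- `ε_{i,(l₁,l₂)} := {l₁·β_i/α_i} + {l₂·β_i/α_i} − {(l₁+l₂)·β_i/α_i}`. -/
noncomputable def epsQ (ν : ℕ) (α β : Fin ν → ℤ) (i : Fin ν) (l₁ l₂ : ℤ) : ℚ :=
  Int.fract (((l₁ * β i : ℤ) : ℚ) / (α i : ℚ)) + Int.fract (((l₂ * β i : ℤ) : ℚ) / (α i : ℚ)) -
    Int.fract ((((l₁ + l₂) * β i : ℤ) : ℚ) / (α i : ℚ))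

lemma fract_div_eq_self' {x a : ℤ} (ha : 0 < a) (hx : 0 ≤ x) (hxa : x < a) :
    Int.fract ((x : ℚ) / (a : ℚ)) = (x : ℚ) / (a : ℚ) := by
  refine Int.fract_eq_self.mpr ⟨div_nonneg (by exact_mod_cast hx) (by exact_mod_cast ha.le), ?_⟩
  rw [div_lt_one (by exact_mod_cast ha)]
  exact_mod_cast hxa

/-- Assume `b₀ ≥ ν`. For `l ≥ 1` let `m̃_l` be the number of indices `i` such that
`ε_{i,(l₁,l₂)} = 0` for every `(l₁,l₂) ∈ Λ_l`. Then `s_l ≥ ν − m̃_l`. -/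
theorem stmt13 (ν : ℕ) (hν : 3 ≤ ν) (b0 : ℤ) (α ω : Fin ν → ℤ)
    (hω : ∀ i, 0 < ω i) (hωα : ∀ i, ω i < α i) (hcop : ∀ i, Int.gcd (α i) (ω i) = 1)
    (e : ℚ) (he : e = -(b0 : ℚ) + ∑ i, (ω i : ℚ) / (α i : ℚ)) (hneg : e < 0)
    (β : Fin ν → ℤ) (hβ : ∀ i, β i = α i - ω i)
    (hb0 : (ν : ℤ) ≤ b0) (l : ℤ) (hl : 1 ≤ l)
    (mt : ℕ)
    (hmt : mt = Set.ncard {i : Fin ν | ∀ l₁ l₂ : ℤ, 1 ≤ l₁ → 1 ≤ l₂ → l₁ + l₂ = l →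
      0 ≤ sVal ν b0 α ω l₁ → 0 ≤ sVal ν b0 α ω l₂ → epsQ ν α β i l₁ l₂ = 0}) :
    (ν : ℤ) - mt ≤ sVal ν b0 α ω l := by
  classical
  have hα : ∀ i, 0 < α i := fun i => (hω i).trans (hωα i)
  have hβpos : ∀ i, 0 < β i := fun i => by rw [hβ i]; linarith [hωα i]
  set S : Set (Fin ν) := {i : Fin ν | ∀ l₁ l₂ : ℤ, 1 ≤ l₁ → 1 ≤ l₂ → l₁ + l₂ = l →
      0 ≤ sVal ν b0 α ω l₁ → 0 ≤ sVal ν b0 α ω l₂ → epsQ ν α β i l₁ l₂ = 0} with hS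
  -- if l * β i < α i then i ∈ S
  have key : ∀ i : Fin ν, l * β i < α i → i ∈ S := by
    intro i hi l₁ l₂ h1 h2 hsum _ _
    have hb : 0 < β i := hβpos i
    have hl1 : l₁ ≤ l := by nlinarith
    have hl2 : l₂ ≤ l := by nlinarith
    have h1n : 0 ≤ l₁ * β i := by nlinarith
    have h2n : 0 ≤ l₂ * β i := by nlinarith
    have hln : 0 ≤ l * β i := by nlinarith
    have h1lt : l₁ * β i < α i := by nlinarith
    have h2lt : l₂ * β i < α i := by nlinarith
    unfold epsQ
    rw [hsum]
    rw [fract_div_eq_self' (hα i) h1n h1lt, fract_div_eq_self' (hα i) h2n h2lt,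
        fract_div_eq_self' (hα i) hln hi]
    have hlq : (l : ℚ) = (l₁ : ℚ) + (l₂ : ℚ) := by exact_mod_cast hsum.symm
    push_cast
    rw [hlq]
    ring
  -- ceiling bounds
  have hceil_le : ∀ i : Fin ν, ⌈((l * ω i : ℤ) : ℚ) / (α i : ℚ)⌉ ≤ l := by
    intro i
    rw [Int.ceil_le, div_le_iff₀ (by exact_mod_cast hα i)]
    have : l * ω i ≤ l * α i := mul_le_mul_of_nonneg_left (hωα i).le (by linarith)
    exact_mod_cast this
  have hceil_lt : ∀ i : Fin ν, i ∉ S → ⌈((l * ω i : ℤ) : ℚ) / (α i : ℚ)⌉ ≤ l - 1 := by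
    intro i hi
    by_contra h
    push_neg at h
    have h2 : ((l - 1 : ℤ) : ℚ) < ((l * ω i : ℤ) : ℚ) / (α i : ℚ) := Int.lt_ceil.mp h
    rw [lt_div_iff₀ (by exact_mod_cast hα i)] at h2
    have h3 : (l - 1) * α i < l * ω i := by exact_mod_cast h2
    have h4 : l * β i < α i := by rw [hβ i]; nlinarith
    exact hi (key i h4)
  -- counting
  set F : Finset (Fin ν) := Finset.univ.filter (fun i => i ∈ S) with hF
  have hSF : S = ↑F := by ext i; simp [hF]
  have hmtF : mt = F.card := by rw [hmt, hSF, Set.ncard_coe_finset]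
  have hcount : ∑ i : Fin ν, (if i ∈ S then (0 : ℤ) else 1) = (ν : ℤ) - F.card := by
    have h1 : ∑ i : Fin ν, (if i ∈ S then (0 : ℤ) else 1)
        = ∑ i : Fin ν, ((1 : ℤ) - if i ∈ S then 1 else 0) := by
      apply Finset.sum_congr rfl
      intro i _
      by_cases h : i ∈ S <;> simp [h]
    rw [h1, Finset.sum_sub_distrib, Finset.sum_const, Finset.sum_boole]
    simp [hF, Finset.card_univ]
  have hstep : ∑ i : Fin ν, (if i ∈ S then (0 : ℤ) else 1)
      ≤ ∑ i : Fin ν, (l - ⌈((l * ω i : ℤ) : ℚ) / (α i : ℚ)⌉) := by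
    apply Finset.sum_le_sum
    intro i _
    by_cases h : i ∈ S
    · simp only [h, if_true]
      linarith [hceil_le i]
    · simp only [h, if_false]
      linarith [hceil_lt i h]
  have hsum2 : ∑ i : Fin ν, (l - ⌈((l * ω i : ℤ) : ℚ) / (α i : ℚ)⌉)
      = (ν : ℤ) * l - ∑ i : Fin ν, ⌈((l * ω i : ℤ) : ℚ) / (α i : ℚ)⌉ := by
    rw [Finset.sum_sub_distrib, Finset.sum_const, Finset.card_univ]
    simp [mul_comm]
  have hbl : (ν : ℤ) * l ≤ l * b0 := by
    have := mul_le_mul_of_nonneg_right hb0 (by linarith : (0:ℤ) ≤ l)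
    linarith
  have hcard_le : (F.card : ℤ) ≤ (ν : ℤ) := by
    have h := Finset.card_filter_le (Finset.univ : Finset (Fin ν)) (fun i => i ∈ S)
    rw [Finset.card_univ, Fintype.card_fin] at h
    rw [hF]
    exact_mod_cast h
  unfold sVal
  rw [hmtF]
  linarith [hstep, hcount, hsum2]
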